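/- Let V be a finite set of points in the Euclidean plane ℝ², let T be a minimum spanning tree of V, let v ∈ V, and let w and z be two distinct neighbours of v in T. Then ∠(w, v, z) ≥ π/3. -/

import Mathlib

open scoped BigOperators

noncomputable section

/-- The Euclidean plane. -/
abbrev Pt : Type := EuclideanSpace ℝ (Fin 2)

/-- The length of an edge (an unordered pair of points): the Euclidean
distance between its endpoints. -/
def edgeLen : Sym2 Pt → ℝ :=
  Sym2.lift ⟨fun a b => dist a b, fun a b => dist_comm a b⟩

/-- The total length of a graph on the plane: the sum of the Euclidean
lengths of its edges. -/
def glength (G : SimpleGraph Pt) : ℝ := ∑ᶠ e ∈ G.edgeSet, edgeLen e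

/-- `G` is a spanning tree of the point set `V`: all its edges join points of
`V`, it is acyclic, and all points of `V` are pairwise connected in `G`. -/
def IsSpanningTreeOn (V : Set Pt) (G : SimpleGraph Pt) : Prop :=
  (∀ ⦃x y : Pt⦄, G.Adj x y → x ∈ V ∧ y ∈ V) ∧ G.IsAcyclic ∧
    ∀ x ∈ V, ∀ y ∈ V, G.Reachable x y

/-- `G` is a minimum spanning tree of the point set `V`. -/
def IsMSTOn (V : Set Pt) (G : SimpleGraph Pt) : Prop :=
  IsSpanningTreeOn V G ∧
    ∀ H : SimpleGraph Pt, IsSpanningTreeOn V H → glength G ≤ glength H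

@[simp] lemma edgeLen_mk (a b : Pt) : edgeLen s(a, b) = dist a b := rfl

/-- If every adjacency in `G` yields reachability in `H`, then reachability in `G`
yields reachability in `H`. -/
lemma reachable_of_adj_reachable {G H : SimpleGraph Pt}
    (hGH : ∀ ⦃a b : Pt⦄, G.Adj a b → H.Reachable a b) {x y : Pt}
    (h : G.Reachable x y) : H.Reachable x y := by
  obtain ⟨p⟩ := h
  induction p with
  | nil => exact SimpleGraph.Reachable.refl _
  | cons h p ih => exact (hGH h).trans ih

/-- The exchange argument: in an MST, an edge `vw` is at most as long as the
segment `wz` to any other neighbour `z` of `v`. -/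
lemma mst_exchange (V : Finset Pt) (T : SimpleGraph Pt) (hT : IsMSTOn ↑V T)
    {v w z : Pt} (hwz : w ≠ z) (hw : T.Adj v w) (hz : T.Adj v z) :
    dist v w ≤ dist w z := by
  classical
  by_contra hcon
  push_neg at hcon
  obtain ⟨⟨hVe, hac, hconn⟩, hmin⟩ := hT
  have hvw : v ≠ w := hw.ne
  have hvz : v ≠ z := hz.ne
  have hwV : w ∈ (V : Set Pt) := (hVe hw).2
  have hzV : z ∈ (V : Set Pt) := (hVe hz).2
  -- `vw` is a bridge in `T`
  have hbridge := (SimpleGraph.isAcyclic_iff_forall_adj_isBridge.mp hac) hw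
  set T' : SimpleGraph Pt := T \ SimpleGraph.fromEdgeSet {s(v, w)} with hT'def
  have hnr : ¬ T'.Reachable v w := fun h => hbridge h
  have hT'z : T'.Adj v z := by
    rw [hT'def, SimpleGraph.sdiff_adj]
    refine ⟨hz, ?_⟩
    rw [SimpleGraph.fromEdgeSet_adj]
    rintro ⟨h1, -⟩
    rw [Set.mem_singleton_iff, Sym2.congr_right] at h1
    exact hwz h1.symm
  -- `wz` is not an edge of `T`
  have hwzT : ¬ T.Adj w z := by
    intro hA
    apply hnr
    have h1 : T'.Adj z w := by
      rw [hT'def, SimpleGraph.sdiff_adj]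
      refine ⟨hA.symm, ?_⟩
      rw [SimpleGraph.fromEdgeSet_adj]
      rintro ⟨h1, -⟩
      rw [Set.mem_singleton_iff, Sym2.congr_left] at h1
      exact hvz h1.symm
    exact hT'z.reachable.trans h1.reachable
  -- the exchanged graph
  set H : SimpleGraph Pt := T' ⊔ SimpleGraph.fromEdgeSet {s(w, z)} with hHdef
  have hHwz : H.Adj w z := by
    rw [hHdef, SimpleGraph.sup_adj, SimpleGraph.fromEdgeSet_adj]
    exact Or.inr ⟨rfl, hwz⟩
  have hT'le : T' ≤ T := sdiff_le
  -- H edges are in V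
  have hHV : ∀ ⦃x y : Pt⦄, H.Adj x y → x ∈ (V : Set Pt) ∧ y ∈ (V : Set Pt) := by
    intro x y hxy
    rw [hHdef, SimpleGraph.sup_adj] at hxy
    rcases hxy with h | h
    · exact hVe (hT'le h)
    · rw [SimpleGraph.fromEdgeSet_adj, Set.mem_singleton_iff] at h
      rcases Sym2.eq_iff.mp h.1 with ⟨rfl, rfl⟩ | ⟨rfl, rfl⟩
      · exact ⟨hwV, hzV⟩
      · exact ⟨hzV, hwV⟩
  -- reachability from v to w in H
  have hHvz : H.Adj v z := by
    rw [hHdef, SimpleGraph.sup_adj]; exact Or.inl hT'z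
  have hvwH : H.Reachable v w := hHvz.reachable.trans hHwz.symm.reachable
  -- every T-adjacency gives H-reachability
  have hTH : ∀ ⦃a b : Pt⦄, T.Adj a b → H.Reachable a b := by
    intro a b hab
    by_cases he : s(a, b) = s(v, w)
    · rcases Sym2.eq_iff.mp he with ⟨rfl, rfl⟩ | ⟨rfl, rfl⟩
      · exact hvwH
      · exact hvwH.symm
    · refine SimpleGraph.Adj.reachable ?_
      rw [hHdef, SimpleGraph.sup_adj]
      left
      rw [hT'def, SimpleGraph.sdiff_adj]
      refine ⟨hab, ?_⟩
      rw [SimpleGraph.fromEdgeSet_adj]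
      rintro ⟨h1, -⟩
      exact he (Set.mem_singleton_iff.mp h1)
  -- H is acyclic
  have hHac : H.IsAcyclic := by
    intro a c hc
    by_cases hmem : s(w, z) ∈ c.edges
    · have hkey := SimpleGraph.adj_and_reachable_delete_edges_iff_exists_cycle.mpr
        ⟨a, c, hc, hmem⟩
      have hreach : (H \ SimpleGraph.fromEdgeSet {s(w, z)}).Reachable w z := hkey.2
      have hle : (H \ SimpleGraph.fromEdgeSet {s(w, z)}) ≤ T' := by
        intro x y hxy
        rw [SimpleGraph.sdiff_adj, hHdef, SimpleGraph.sup_adj] at hxy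
        rcases hxy.1 with h | h
        · exact h
        · exact absurd h hxy.2
      have hwzT' : T'.Reachable w z := hreach.mono hle
      exact hnr (hT'z.reachable.trans hwzT'.symm)
    · have hedges : ∀ e ∈ c.edges, e ∈ T.edgeSet := by
        intro e he
        have heH : e ∈ H.edgeSet := c.edges_subset_edgeSet he
        rw [hHdef, SimpleGraph.edgeSet_sup, SimpleGraph.edgeSet_fromEdgeSet] at heH
        rcases heH with h | h
        · rw [hT'def, SimpleGraph.edgeSet_sdiff] at h
          exact h.1
        · rw [Set.mem_diff, Set.mem_singleton_iff] at h
          exact absurd (h.1 ▸ he) hmem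
      exact hac (c.transfer T hedges) (hc.transfer hedges)
  -- H is a spanning tree on V
  have hHst : IsSpanningTreeOn ↑V H := by
    refine ⟨hHV, hHac, fun x hx y hy => ?_⟩
    exact reachable_of_adj_reachable hTH (hconn x hx y hy)
  -- finiteness of edge sets
  have hfinT : T.edgeSet.Finite := by
    refine Set.Finite.subset (t := T.edgeSet) (((V : Set Pt) ×ˢ (V : Set Pt)).toFinite.image (fun p : Pt × Pt => s(p.1, p.2))) ?_
    intro e he
    induction e using Sym2.ind with
    | _ x y =>
      rw [SimpleGraph.mem_edgeSet] at he
      exact ⟨(x, y), Set.mk_mem_prod (hVe he).1 (hVe he).2, rfl⟩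
  -- edge set of H
  have hd2 : ¬ (s(w, z) : Sym2 Pt).IsDiag := by
    rw [Sym2.mk_isDiag_iff]; exact hwz
  have HE : H.edgeSet = insert s(w, z) (T.edgeSet \ {s(v, w)}) := by
    rw [hHdef, SimpleGraph.edgeSet_sup, hT'def, SimpleGraph.edgeSet_sdiff,
      SimpleGraph.edgeSet_fromEdgeSet, SimpleGraph.edgeSet_fromEdgeSet]
    ext e
    simp only [Set.mem_union, Set.mem_diff, Set.mem_singleton_iff, Set.mem_setOf_eq,
      Set.mem_insert_iff]
    constructor
    · rintro (⟨heT, hne⟩ | ⟨he, -⟩)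
      · exact Or.inr ⟨heT, fun h => hne ⟨h, T.not_isDiag_of_mem_edgeSet heT⟩⟩
      · exact Or.inl he
    · rintro (he | ⟨heT, hne⟩)
      · exact Or.inr ⟨he, fun hd => hd2 (he ▸ hd)⟩
      · exact Or.inl ⟨heT, fun ⟨h, _⟩ => hne h⟩
  -- compute lengths
  set s : Finset (Sym2 Pt) := hfinT.toFinset with hsdef
  have he1s : s(v, w) ∈ s := by
    rw [hsdef, Set.Finite.mem_toFinset]; exact hw
  have he2s : s(w, z) ∉ s := by
    rw [hsdef, Set.Finite.mem_toFinset]; exact hwzT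
  have hTsum : glength T = edgeLen s(v, w) + ∑ e ∈ s.erase s(v, w), edgeLen e := by
    unfold glength
    rw [← Set.Finite.coe_toFinset hfinT, finsum_mem_coe_finset, ← hsdef,
      Finset.add_sum_erase s edgeLen he1s]
  have hHsum : glength H = edgeLen s(w, z) + ∑ e ∈ s.erase s(v, w), edgeLen e := by
    have hcoe : (↑(insert s(w, z) (s.erase s(v, w))) : Set (Sym2 Pt)) = H.edgeSet := by
      rw [Finset.coe_insert, Finset.coe_erase, hsdef, Set.Finite.coe_toFinset, HE]
    unfold glength
    rw [← hcoe, finsum_mem_coe_finset,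
      Finset.sum_insert (fun h => he2s (Finset.mem_of_mem_erase h))]
  have hlt : glength H < glength T := by
    rw [hTsum, hHsum, edgeLen_mk, edgeLen_mk]
    linarith
  exact absurd (hmin H hHst) (not_le.mpr hlt)

theorem stmt2 (V : Finset Pt) (T : SimpleGraph Pt) (hT : IsMSTOn ↑V T)
    (v : Pt) (hv : v ∈ V) (w z : Pt) (hwz : w ≠ z)
    (hw : T.Adj v w) (hz : T.Adj v z) :
    Real.pi / 3 ≤ EuclideanGeometry.angle w v z := by
  have h1 : dist v w ≤ dist w z := mst_exchange V T hT hwz hw hz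
  have h2 : dist v z ≤ dist w z := by
    have := mst_exchange V T hT hwz.symm hz hw
    rwa [dist_comm z w] at this
  have ha : 0 < dist v w := dist_pos.mpr hw.ne
  have hb : 0 < dist v z := dist_pos.mpr hz.ne
  have hlaw := EuclideanGeometry.law_cos w v z
  -- dist w z * dist w z = dist w v * dist w v + dist z v * dist z v - 2 * ...
  rw [dist_comm w v, dist_comm z v] at hlaw
  have hcos : Real.cos (EuclideanGeometry.angle w v z) ≤ 1 / 2 := by
    nlinarith [mul_nonneg (sub_nonneg.mpr h1) (by linarith : (0:ℝ) ≤ dist w z + dist v w - dist v z),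
      mul_nonneg hb.le (sub_nonneg.mpr h2), mul_pos ha hb]
  by_contra hlt
  push_neg at hlt
  have h0 : (0:ℝ) ≤ EuclideanGeometry.angle w v z := EuclideanGeometry.angle_nonneg _ _ _
  have hpi : EuclideanGeometry.angle w v z ≤ Real.pi := EuclideanGeometry.angle_le_pi _ _ _
  have := Real.strictAntiOn_cos ⟨h0, hpi⟩
    ⟨by positivity, by linarith [Real.pi_pos]⟩ hlt
  rw [Real.cos_pi_div_three] at this
  linarith

end
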